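/- Let Z ~ SN_k(Ω,α). Then there exists a non-singular k×k matrix A* such that the random vector Z* = A* Z has distribution SN_k(I_k, α*), where at most one component of α* ∈ ℝ^k is nonzero and the nonzero component (if any) equals √(αᵀΩα); equivalently, the density of Z* is z ↦ 2 (∏_{i=1}^k φ(z_i)) Φ(α*_m z_m) for some index m, where α*_m = √(αᵀΩα). -/

import Mathlib

open MeasureTheory Matrix ProbabilityTheory Real

/-- Standard normal cumulative distribution function
`Φ(x) = ∫_{-∞}^x (2π)^{-1/2} exp(-u²/2) du`. -/
noncomputable def stdNormCDF (x : ℝ) : ℝ :=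
  ∫ u in Set.Iic x, (2 * Real.pi) ^ (-(1:ℝ)/2) * Real.exp (-(u ^ 2) / 2)

/-- Density `φ(z; Ω) = (2π)^{-k/2} (det Ω)^{-1/2} exp(-½ zᵀ Ω⁻¹ z)` of the centred
multivariate normal distribution with covariance matrix `Ω`. -/
noncomputable def mvNormalPDF {ι : Type*} [Fintype ι] [DecidableEq ι]
    (Ω : Matrix ι ι ℝ) (z : ι → ℝ) : ℝ :=
  (2 * Real.pi) ^ (-(Fintype.card ι : ℝ) / 2) * Ω.det ^ (-(1:ℝ)/2) *
    Real.exp (-(z ⬝ᵥ Ω⁻¹.mulVec z) / 2)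

/-- Density `f(z) = 2 φ(z; Ω) Φ(αᵀ z)` of the multivariate skew-normal
distribution `SN(Ω, α)`. -/
noncomputable def snPDF {ι : Type*} [Fintype ι] [DecidableEq ι]
    (Ω : Matrix ι ι ℝ) (α : ι → ℝ) (z : ι → ℝ) : ℝ :=
  2 * mvNormalPDF Ω z * stdNormCDF (α ⬝ᵥ z)

/-- A correlation matrix: symmetric positive definite with unit diagonal. -/
def IsCorrelationMatrix {ι : Type*} [Fintype ι] (Ω : Matrix ι ι ℝ) : Prop :=
  Ω.PosDef ∧ ∀ i, Ω i i = 1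

/-- The law of the multivariate skew-normal distribution `SN(Ω, α)`:
the measure on `ι → ℝ` with density `snPDF Ω α` w.r.t. Lebesgue measure. -/
noncomputable def snMeasure {ι : Type*} [Fintype ι] [DecidableEq ι]
    (Ω : Matrix ι ι ℝ) (α : ι → ℝ) : Measure (ι → ℝ) :=
  volume.withDensity fun z => ENNReal.ofReal (snPDF Ω α z)

/-- Chi-square density with `p` degrees of freedom. -/
noncomputable def chiSqPDF (p : ℕ) (x : ℝ) : ℝ :=
  if 0 < x then x ^ ((p:ℝ)/2 - 1) * Real.exp (-x/2) / (2 ^ ((p:ℝ)/2) * Real.Gamma ((p:ℝ)/2))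
  else 0

/-- Chi-square law with `p` degrees of freedom. -/
noncomputable def chiSqMeasure (p : ℕ) : Measure ℝ :=
  volume.withDensity fun x => ENNReal.ofReal (chiSqPDF p x)

/-! ### Auxiliary lemmas -/

lemma stdNormCDF_monotone : Monotone stdNormCDF := by
  intro x y hxy
  have hint : Integrable (fun u : ℝ => (2 * Real.pi) ^ (-(1:ℝ)/2) * Real.exp (-(u ^ 2) / 2)) := by
    have h := (integrable_exp_neg_mul_sq (by norm_num : (0:ℝ) < 1/2)).const_mul
      ((2 * Real.pi) ^ (-(1:ℝ)/2))
    simpa only [show ∀ u : ℝ, -(1/2 : ℝ) * u ^ 2 = -(u ^ 2) / 2 from fun u => by ring] using h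
  refine setIntegral_mono_set hint.integrableOn ?_ ?_
  · filter_upwards with u
    positivity
  · exact HasSubset.Subset.eventuallyLE (Set.Iic_subset_Iic.mpr hxy)

lemma stdNormCDF_measurable : Measurable stdNormCDF :=
  stdNormCDF_monotone.measurable

lemma snPDF_measurable {k : ℕ} (Ω : Matrix (Fin k) (Fin k) ℝ) (α : Fin k → ℝ) :
    Measurable fun z => ENNReal.ofReal (snPDF Ω α z) := by
  apply Measurable.ennreal_ofReal
  unfold snPDF mvNormalPDF
  have hq : Measurable fun z : Fin k → ℝ => z ⬝ᵥ Ω⁻¹ *ᵥ z := by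
    simp only [dotProduct, mulVec]
    exact Finset.measurable_sum _ fun i _ =>
      ((measurable_pi_apply i).mul (Finset.measurable_sum _ fun j _ =>
        (measurable_const.mul (measurable_pi_apply j))))
  have hl : Measurable fun z : Fin k → ℝ => α ⬝ᵥ z := by
    simp only [dotProduct]
    exact Finset.measurable_sum _ fun i _ => measurable_const.mul (measurable_pi_apply i)
  exact (measurable_const.mul (measurable_const.mul ((hq.neg.div_const 2).exp))).mul
    (stdNormCDF_measurable.comp hl)

lemma map_equiv_withDensity {α β : Type*} [MeasurableSpace α] [MeasurableSpace β]
    (e : α ≃ᵐ β) (μ : Measure α) {f : α → ENNReal} (hf : Measurable f) :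
    Measure.map e (μ.withDensity f) = (Measure.map e μ).withDensity fun x => f (e.symm x) := by
  have hms : Measurable fun x => f (e.symm x) := hf.comp e.symm.measurable
  ext s hs
  rw [Measure.map_apply e.measurable hs, withDensity_apply _ (e.measurable hs),
    withDensity_apply _ hs, setLIntegral_map hs hms e.measurable]
  simp

lemma quad_form_eq {k : ℕ} (M N : Matrix (Fin k) (Fin k) ℝ) (x : Fin k → ℝ) :
    (N *ᵥ x) ⬝ᵥ (M *ᵥ (N *ᵥ x)) = x ⬝ᵥ ((Nᵀ * M * N) *ᵥ x) := by
  rw [mulVec_mulVec, dotProduct_mulVec, dotProduct_mulVec, ← vecMul_transpose N x,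
    vecMul_vecMul, Matrix.mul_assoc]

/-- Householder reflection: an orthogonal symmetric matrix sending `v` to
`√(v ⬝ᵥ v)` times the `m`-th basis vector. -/
lemma exists_reflection {k : ℕ} (m : Fin k) (v : Fin k → ℝ) :
    ∃ P : Matrix (Fin k) (Fin k) ℝ, Pᵀ = P ∧ P * P = 1 ∧
      P *ᵥ v = Pi.single m (Real.sqrt (v ⬝ᵥ v)) := by
  set c := Real.sqrt (v ⬝ᵥ v) with hc
  set u : Fin k → ℝ := Pi.single m c with hu
  by_cases hw : v - u = 0
  · refine ⟨1, by simp, by simp, ?_⟩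
    rw [one_mulVec, show v = u from sub_eq_zero.mp hw]
  · set w := v - u with hwdef
    have hvv : 0 ≤ v ⬝ᵥ v := Finset.sum_nonneg fun i _ => mul_self_nonneg _
    have hc2 : c * c = v ⬝ᵥ v := Real.mul_self_sqrt hvv
    have huu : u ⬝ᵥ u = c * c := by rw [hu, single_dotProduct, Pi.single_eq_same]
    have huv : u ⬝ᵥ v = c * v m := by rw [hu, single_dotProduct]
    have hvu : v ⬝ᵥ u = v m * c := by rw [hu, dotProduct_single]
    have hd : w ⬝ᵥ w = 2 * (w ⬝ᵥ v) := by
      simp only [hwdef, sub_dotProduct, dotProduct_sub, huu, huv, hvu, hc2]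
      ring
    have hdne : w ⬝ᵥ w ≠ 0 := fun h => hw (dotProduct_self_eq_zero.mp h)
    set W := vecMulVec w w with hWdef
    have hWT : Wᵀ = W := by
      ext i j; simp [hWdef, vecMulVec_apply, mul_comm]
    have hWv : W *ᵥ v = (w ⬝ᵥ v) • w := by
      ext i
      simp only [hWdef, mulVec, dotProduct, vecMulVec_apply, Pi.smul_apply, smul_eq_mul,
        mul_assoc]
      rw [← Finset.mul_sum]
      ring
    have hWW : W * W = (w ⬝ᵥ w) • W := by
      ext i j
      simp only [hWdef, Matrix.mul_apply, vecMulVec_apply, Matrix.smul_apply,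
        smul_eq_mul, dotProduct]
      calc ∑ l, (w i * w l) * (w l * w j)
          = ∑ l, (w l * w l) * (w i * w j) := Finset.sum_congr rfl fun l _ => by ring
        _ = (∑ l, w l * w l) * (w i * w j) := by rw [Finset.sum_mul]
    refine ⟨1 - (2/(w ⬝ᵥ w)) • W, ?_, ?_, ?_⟩
    · rw [transpose_sub, transpose_smul, hWT, transpose_one]
    · have expand : (1 - (2/(w ⬝ᵥ w)) • W) * (1 - (2/(w ⬝ᵥ w)) • W)
          = 1 - (2/(w ⬝ᵥ w)) • W - (2/(w ⬝ᵥ w)) • W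
            + ((2/(w ⬝ᵥ w)) * ((2/(w ⬝ᵥ w)) * (w ⬝ᵥ w))) • W := by
        simp only [sub_mul, mul_sub, Matrix.one_mul, Matrix.mul_one, Matrix.smul_mul,
          Matrix.mul_smul, hWW, smul_smul]
        abel
      rw [expand, show (2/(w ⬝ᵥ w)) * ((2/(w ⬝ᵥ w)) * (w ⬝ᵥ w)) = 2/(w ⬝ᵥ w) + 2/(w ⬝ᵥ w) by
        field_simp; ring, add_smul]
      abel
    · have hwvne : w ⬝ᵥ v ≠ 0 := by
        intro h0; exact hdne (by rw [hd, h0, mul_zero])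
      have hwv : (2/(w ⬝ᵥ w)) * (w ⬝ᵥ v) = 1 := by
        rw [hd]; field_simp
      rw [sub_mulVec, one_mulVec, smul_mulVec, hWv, smul_smul, hwv, one_smul,
        hwdef]
      simp [hu]

/-- Pushforward of a skew-normal law under an invertible linear map normalising `Ω`. -/
lemma snMeasure_map_mulVec {k : ℕ} (Ω A : Matrix (Fin k) (Fin k) ℝ) (hΩ : Ω.PosDef)
    (α αs : Fin k → ℝ) (hA : A * Ω * Aᵀ = 1) (hαs : (A * Ω) *ᵥ α = αs) :
    Measure.map (A.mulVec) (snMeasure Ω α) = snMeasure 1 αs := by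
  have hΩdet : 0 < Ω.det := hΩ.det_pos
  have hΩunit : IsUnit Ω.det := (isUnit_iff_ne_zero).mpr hΩdet.ne'
  have hΩT : Ωᵀ = Ω := hΩ.isHermitian.eq
  have hdet2 : A.det * Ω.det * A.det = 1 := by
    have := congrArg Matrix.det hA
    simpa [det_mul, det_transpose] using this
  have hAdet : A.det ≠ 0 := by
    intro h; rw [h] at hdet2; simp at hdet2
  have hAunit : IsUnit A.det := (isUnit_iff_ne_zero).mpr hAdet
  have hΩdet_eq : Ω.det = A.det⁻¹ * A.det⁻¹ := by
    field_simp
    linear_combination hdet2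
  -- A⁻¹ and its transpose
  have hAinv : A⁻¹ = Ω * Aᵀ := inv_eq_right_inv (by rw [← Matrix.mul_assoc]; exact hA)
  have hAinvT : A⁻¹ᵀ = A * Ω := by rw [hAinv, transpose_mul, transpose_transpose, hΩT]
  have hAinvdet : A⁻¹.det ≠ 0 := by
    rw [det_nonsing_inv]
    simpa using hAdet
  -- the key matrix identity for the quadratic form
  have hkey : A⁻¹ᵀ * Ω⁻¹ * A⁻¹ = 1 := by
    rw [hAinvT, hAinv, Matrix.mul_assoc, Matrix.mul_assoc, ← Matrix.mul_assoc Ω⁻¹,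
      Matrix.nonsing_inv_mul Ω hΩunit, Matrix.one_mul, ← Matrix.mul_assoc]
    exact hA
  have hquad : ∀ x : Fin k → ℝ, (A⁻¹ *ᵥ x) ⬝ᵥ (Ω⁻¹ *ᵥ (A⁻¹ *ᵥ x)) = x ⬝ᵥ x := by
    intro x
    rw [quad_form_eq, hkey, one_mulVec]
  have hphi : ∀ x : Fin k → ℝ, α ⬝ᵥ (A⁻¹ *ᵥ x) = αs ⬝ᵥ x := by
    intro x
    rw [dotProduct_mulVec, ← mulVec_transpose, hAinvT, hαs]
  -- the constant
  have hconst : |A.det⁻¹| * Ω.det ^ (-(1:ℝ)/2) = 1 := by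
    have h1 : Ω.det ^ (-(1:ℝ)/2) = (Real.sqrt Ω.det)⁻¹ := by
      rw [show (-(1:ℝ)/2) = -(1/2) by norm_num, Real.rpow_neg hΩdet.le,
        ← Real.sqrt_eq_rpow]
    rw [h1, hΩdet_eq, Real.sqrt_mul_self_eq_abs]
    rw [abs_inv]
    field_simp
  -- the measurable equivalence
  let e : (Fin k → ℝ) ≃ᵐ (Fin k → ℝ) :=
    { toFun := A.mulVec
      invFun := A⁻¹.mulVec
      left_inv := fun x => by
        rw [mulVec_mulVec, Matrix.nonsing_inv_mul A hAunit, one_mulVec]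
      right_inv := fun x => by
        rw [mulVec_mulVec, Matrix.mul_nonsing_inv A hAunit, one_mulVec]
      measurable_toFun := ((A.mulVecLin).continuous_of_finiteDimensional).measurable
      measurable_invFun := ((A⁻¹.mulVecLin).continuous_of_finiteDimensional).measurable }
  have hvol : Measure.map (⇑e) volume = ENNReal.ofReal |A.det⁻¹| • volume := by
    have : (⇑e : (Fin k → ℝ) → (Fin k → ℝ)) = ⇑(toLin' A) := by
      funext x; simp [e, Matrix.toLin'_apply]; rfl
    rw [this]
    exact Real.map_matrix_volume_pi_eq_smul_volume_pi hAdet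
  have step : Measure.map (A.mulVec) (snMeasure Ω α)
      = (ENNReal.ofReal |A.det⁻¹| • volume).withDensity
          fun x => ENNReal.ofReal (snPDF Ω α (A⁻¹ *ᵥ x)) := by
    have := map_equiv_withDensity e volume (snPDF_measurable Ω α)
    rw [hvol] at this
    exact this
  rw [step, withDensity_smul_measure, ← withDensity_smul' _ _ ENNReal.ofReal_ne_top]
  simp only [snMeasure]
  congr 1
  funext x
  simp only [Pi.smul_apply, smul_eq_mul]
  rw [← ENNReal.ofReal_mul (abs_nonneg _)]
  congr 1
  unfold snPDF mvNormalPDF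
  rw [hquad x, hphi x, det_one, Real.one_rpow, inv_one, one_mulVec]
  linear_combination (2 * ((2 * Real.pi) ^ (-(Fintype.card (Fin k) : ℝ) / 2) *
    Real.exp (-(x ⬝ᵥ x) / 2)) * stdNormCDF (αs ⬝ᵥ x)) * hconst

open scoped MatrixOrder in
lemma exists_sym_sqrt {k : ℕ} {M : Matrix (Fin k) (Fin k) ℝ} (hM : M.PosSemidef) :
    ∃ B : Matrix (Fin k) (Fin k) ℝ, B * B = M ∧ Bᵀ = B := by
  refine ⟨CFC.sqrt M, CFC.sqrt_mul_sqrt_self M hM.nonneg, ?_⟩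
  have := (CFC.sqrt_nonneg M).posSemidef.1
  simpa using this.eq

/-- canonical form.  For `Z ~ SN_k(Ω, α)` there is a non-singular
matrix `A*` such that `Z* = A* Z ~ SN_k(I_k, α*)` where `α*` has at most one
nonzero component, equal to `√(αᵀΩα)`. -/
theorem skewNormal_canonical_form {k : ℕ} (hk : 0 < k)
    (Ω : Matrix (Fin k) (Fin k) ℝ) (hΩ : IsCorrelationMatrix Ω) (α : Fin k → ℝ)
    {S : Type*} [MeasureSpace S] [IsProbabilityMeasure (ℙ : Measure S)]
    (Z : S → Fin k → ℝ) (hZmeas : Measurable Z)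
    (hZlaw : Measure.map Z ℙ = snMeasure Ω α) :
    ∃ (Astar : Matrix (Fin k) (Fin k) ℝ) (m : Fin k), Astar.det ≠ 0 ∧
      Measure.map (fun ω => Astar.mulVec (Z ω)) ℙ =
        snMeasure (1 : Matrix (Fin k) (Fin k) ℝ)
          (Pi.single m (Real.sqrt (α ⬝ᵥ Ω.mulVec α))) := by
  obtain ⟨hpd, -⟩ := hΩ
  have hΩdet : 0 < Ω.det := hpd.det_pos
  have hΩunit : IsUnit Ω.det := (isUnit_iff_ne_zero).mpr hΩdet.ne'
  have hΩT : Ωᵀ = Ω := hpd.isHermitian.eq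
  -- B = (Ω⁻¹)^{1/2}
  obtain ⟨B, hBB, hBT⟩ := exists_sym_sqrt hpd.inv.posSemidef
  have hBdet : B.det ≠ 0 := by
    intro h
    have : (B * B).det = 0 := by rw [det_mul, h, mul_zero]
    rw [hBB, det_nonsing_inv] at this
    exact hΩdet.ne' (by simpa using this)
  have hBunit : IsUnit B.det := (isUnit_iff_ne_zero).mpr hBdet
  have hBΩB : B * Ω * B = 1 := by
    have hΩeq : Ω = B⁻¹ * B⁻¹ := by
      rw [← Matrix.mul_inv_rev, hBB, Matrix.nonsing_inv_nonsing_inv Ω hΩunit]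
    rw [hΩeq, Matrix.mul_assoc, Matrix.mul_assoc, Matrix.nonsing_inv_mul B hBunit,
      Matrix.mul_one, Matrix.mul_nonsing_inv B hBunit]
  -- the vector to reflect
  set v : Fin k → ℝ := (B * Ω) *ᵥ α with hvdef
  have hNTN : (B * Ω)ᵀ * (B * Ω) = Ω := by
    rw [transpose_mul, hΩT, hBT, Matrix.mul_assoc, ← Matrix.mul_assoc B B Ω, hBB,
      ← Matrix.mul_assoc, Matrix.mul_nonsing_inv Ω hΩunit, Matrix.one_mul]
  have hvv : v ⬝ᵥ v = α ⬝ᵥ Ω *ᵥ α := by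
    have h := quad_form_eq 1 (B * Ω) α
    rw [one_mulVec, Matrix.mul_one, hNTN] at h
    simpa [hvdef] using h
  set m : Fin k := ⟨0, hk⟩ with hm
  obtain ⟨P, hPT, hPP, hPv⟩ := exists_reflection m v
  set A := P * B with hAdef
  have hA : A * Ω * Aᵀ = 1 := by
    rw [hAdef, transpose_mul, hBT, hPT, Matrix.mul_assoc P B Ω,
      Matrix.mul_assoc P (B * Ω) (B * P), ← Matrix.mul_assoc (B * Ω) B P, hBΩB,
      Matrix.one_mul, hPP]
  have hαs : (A * Ω) *ᵥ α = Pi.single m (Real.sqrt (α ⬝ᵥ Ω *ᵥ α)) := by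
    rw [hAdef, Matrix.mul_assoc, ← mulVec_mulVec, ← hvdef, hPv, hvv]
  have hAdet : A.det ≠ 0 := by
    have hdet2 : A.det * Ω.det * A.det = 1 := by
      have := congrArg Matrix.det hA
      simpa [det_mul, det_transpose] using this
    intro h; rw [h] at hdet2; simp at hdet2
  refine ⟨A, m, hAdet, ?_⟩
  have hmeas : Measurable (A.mulVec) :=
    ((A.mulVecLin).continuous_of_finiteDimensional).measurable
  have : Measure.map (fun ω => A.mulVec (Z ω)) ℙ = Measure.map A.mulVec (Measure.map Z ℙ) :=
    (Measure.map_map hmeas hZmeas).symm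
  rw [this, hZlaw]
  exact snMeasure_map_mulVec Ω A hpd α _ hA hαs
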